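/- Let P be a symmetric positive semidefinite real d×d matrix satisfying A P + P Aᵀ + N P Nᵀ + B Bᵀ = 0. Let V := (ker P)^⊥ = ran(P). Let φ : [0,∞) → ℝ^d be a C¹ solution of φ'(t) = A φ(t) + N φ(t−τ) + B u(t) with continuous control u : [0,∞) → ℝ^n and history φ(t) ∈ V for t ∈ [−τ,0]. Then φ(t) ∈ V for all t ≥ 0. -/

import Mathlib

open Matrix Set

private lemma zero_of_deriv_norm_le {E : Type*} [NormedAddCommGroup E] [NormedSpace ℝ E]
    {ψ ψd : ℝ → E} {C a b : ℝ}
    (hcont : ContinuousOn ψ (Icc a b)) (ha : ψ a = 0)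
    (hd : ∀ t ∈ Ioo a b, HasDerivAt ψ (ψd t) t)
    (hbd : ∀ t ∈ Ioo a b, ‖ψd t‖ ≤ C * ‖ψ t‖) :
    ∀ t ∈ Icc a b, ψ t = 0 := by
  intro t ht
  rcases eq_or_lt_of_le ht.1 with h | hat
  · rw [← h, ha]
  rw [← norm_le_zero_iff]
  have hclos : a ∈ closure (Ioo a t) := by
    rw [closure_Ioo hat.ne]; exact ⟨le_refl a, hat.le⟩
  haveI hne : (nhdsWithin a (Ioo a t)).NeBot := mem_closure_iff_nhdsWithin_neBot.mp hclos
  have hbound : ∀ a' ∈ Ioo a t, ‖ψ t‖ ≤ ‖ψ a'‖ * Real.exp (C * (t - a')) := by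
    intro a' ha'
    have h1 : ∀ x ∈ Ico a' t, HasDerivWithinAt ψ (ψd x) (Ici x) x := by
      intro x hx
      exact (hd x ⟨lt_of_lt_of_le ha'.1 hx.1, lt_of_lt_of_le hx.2 ht.2⟩).hasDerivWithinAt
    have h2 : ∀ x ∈ Ico a' t, ‖ψd x‖ ≤ C * ‖ψ x‖ + 0 := by
      intro x hx
      rw [add_zero]
      exact hbd x ⟨lt_of_lt_of_le ha'.1 hx.1, lt_of_lt_of_le hx.2 ht.2⟩
    have := norm_le_gronwallBound_of_norm_deriv_right_le
      (hcont.mono (Icc_subset_Icc ha'.1.le ht.2)) h1 (le_refl _) h2 t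
      ⟨ha'.2.le, le_refl t⟩
    rwa [gronwallBound_ε0] at this
  have htψ : Filter.Tendsto ψ (nhdsWithin a (Ioo a t)) (nhds 0) := by
    rw [← ha]
    exact (hcont a ⟨le_refl a, hat.le.trans ht.2⟩).mono
      (fun x hx => ⟨hx.1.le, hx.2.le.trans ht.2⟩)
  have hexp : Filter.Tendsto (fun a' => Real.exp (C * (t - a'))) (nhdsWithin a (Ioo a t))
      (nhds (Real.exp (C * (t - a)))) :=
    ((Real.continuous_exp.comp
      (continuous_const.mul (continuous_const.sub continuous_id))).tendsto a).mono_left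
      nhdsWithin_le_nhds
  have hev : ∀ᶠ a' in nhdsWithin a (Ioo a t), ‖ψ t‖ ≤ ‖ψ a'‖ * Real.exp (C * (t - a')) :=
    eventually_nhdsWithin_of_forall hbound
  have := ge_of_tendsto (htψ.norm.mul hexp) hev
  simpa using this

/-- If the symmetric positive semidefinite `P` satisfies the reachability Lyapunov
equation `A P + P Aᵀ + N P Nᵀ + B Bᵀ = 0`, then the range of `P` (equivalently, the
orthogonal complement of `ker P`) is invariant under the controlled delay dynamics
`φ'(t) = A φ(t) + N φ(t − τ) + B u(t)`: a solution with history in `ran P` stays in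
`ran P` for all `t ≥ 0`. -/
theorem delay_range_invariance_of_reachability_gramian
    {d n : ℕ} (A N P : Matrix (Fin d) (Fin d) ℝ) (B : Matrix (Fin d) (Fin n) ℝ)
    (τ : ℝ) (hτ : 0 < τ)
    (hP : P.PosSemidef)
    (hLyap : A * P + P * Aᵀ + N * P * Nᵀ + B * Bᵀ = 0)
    (u : ℝ → Fin n → ℝ) (hu : Continuous u)
    (φ : ℝ → Fin d → ℝ)
    (hcont : ContinuousOn φ (Ici (0 : ℝ)))
    (hderiv : ∀ t > (0 : ℝ),
      HasDerivAt φ (A.mulVec (φ t) + N.mulVec (φ (t - τ)) + B.mulVec (u t)) t)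
    (hhist : ∀ t ∈ Icc (-τ) (0 : ℝ), φ t ∈ Set.range P.mulVec) :
    ∀ t ≥ (0 : ℝ), φ t ∈ Set.range P.mulVec := by
  classical
  have hsym : Pᵀ = P := by
    have := hP.1.eq
    rwa [Matrix.conjTranspose_eq_transpose_of_trivial] at this
  -- kernel facts
  have hker : ∀ x : Fin d → ℝ, P.mulVec x = 0 →
      Bᵀ.mulVec x = 0 ∧ P.mulVec (Nᵀ.mulVec x) = 0 ∧ P.mulVec (Aᵀ.mulVec x) = 0 := by
    intro x hx
    have hvec : A.mulVec (P.mulVec x) + P.mulVec (Aᵀ.mulVec x)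
        + N.mulVec (P.mulVec (Nᵀ.mulVec x)) + B.mulVec (Bᵀ.mulVec x) = 0 := by
      have := congrArg (fun M : Matrix (Fin d) (Fin d) ℝ => M.mulVec x) hLyap
      simpa [Matrix.add_mulVec, ← Matrix.mulVec_mulVec] using this
    have hquad : x ⬝ᵥ (A.mulVec (P.mulVec x)) + x ⬝ᵥ (P.mulVec (Aᵀ.mulVec x))
        + x ⬝ᵥ (N.mulVec (P.mulVec (Nᵀ.mulVec x))) + x ⬝ᵥ (B.mulVec (Bᵀ.mulVec x)) = 0 := by
      have := congrArg (fun v => x ⬝ᵥ v) hvec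
      simpa [dotProduct_add] using this
    have e1 : x ⬝ᵥ (A.mulVec (P.mulVec x)) = 0 := by rw [hx]; simp
    have hvm : x ᵥ* P = 0 := by
      rw [← hsym, Matrix.vecMul_transpose, hx]
    have e2 : x ⬝ᵥ (P.mulVec (Aᵀ.mulVec x)) = 0 := by
      rw [Matrix.dotProduct_mulVec, hvm, zero_dotProduct]
    have e3 : x ⬝ᵥ (N.mulVec (P.mulVec (Nᵀ.mulVec x)))
        = (Nᵀ.mulVec x) ⬝ᵥ (P.mulVec (Nᵀ.mulVec x)) := by
      rw [Matrix.dotProduct_mulVec, ← Matrix.mulVec_transpose]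
    have e4 : x ⬝ᵥ (B.mulVec (Bᵀ.mulVec x)) = (Bᵀ.mulVec x) ⬝ᵥ (Bᵀ.mulVec x) := by
      rw [Matrix.dotProduct_mulVec, ← Matrix.mulVec_transpose]
    rw [e1, e2, e3, e4, zero_add, zero_add] at hquad
    have hnn1 : 0 ≤ (Nᵀ.mulVec x) ⬝ᵥ (P.mulVec (Nᵀ.mulVec x)) := by
      have := hP.dotProduct_mulVec_nonneg (Nᵀ.mulVec x)
      simpa using this
    have hnn2 : 0 ≤ (Bᵀ.mulVec x) ⬝ᵥ (Bᵀ.mulVec x) := by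
      exact Finset.sum_nonneg fun i _ => mul_self_nonneg _
    have hz1 : (Nᵀ.mulVec x) ⬝ᵥ (P.mulVec (Nᵀ.mulVec x)) = 0 := by linarith
    have hz2 : (Bᵀ.mulVec x) ⬝ᵥ (Bᵀ.mulVec x) = 0 := by linarith
    have hB : Bᵀ.mulVec x = 0 := dotProduct_self_eq_zero.mp hz2
    have hN : P.mulVec (Nᵀ.mulVec x) = 0 := by
      have := (hP.dotProduct_mulVec_zero_iff (Nᵀ.mulVec x)).mp (by simpa using hz1)
      simpa using this
    refine ⟨hB, hN, ?_⟩
    rw [hx, Matrix.mulVec_zero, hN, Matrix.mulVec_zero, hB, Matrix.mulVec_zero] at hvec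
    simpa using hvec
  -- Euclidean space setup
  let e : EuclideanSpace ℝ (Fin d) ≃L[ℝ] (Fin d → ℝ) :=
    PiLp.continuousLinearEquiv 2 ℝ (fun _ : Fin d => ℝ)
  have hinner : ∀ x y : EuclideanSpace ℝ (Fin d), (inner ℝ x y : ℝ) = (e x) ⬝ᵥ (e y) := by
    intro x y
    simp [PiLp.inner_apply, dotProduct, RCLike.inner_apply, e, mul_comm]
  let T : EuclideanSpace ℝ (Fin d) →ₗ[ℝ] EuclideanSpace ℝ (Fin d) :=
    (e.symm.toLinearEquiv.toLinearMap) ∘ₗ P.mulVecLin ∘ₗ (e.toLinearEquiv.toLinearMap)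
  have hTapp : ∀ x, e (T x) = P.mulVec (e x) := by
    intro x
    simp only [T, LinearMap.comp_apply, Matrix.mulVecLin_apply,
      ContinuousLinearEquiv.coe_toLinearEquiv]
    exact e.apply_symm_apply _
  let K : Submodule ℝ (EuclideanSpace ℝ (Fin d)) := LinearMap.ker T
  have hKmem : ∀ x, x ∈ K ↔ P.mulVec (e x) = 0 := by
    intro x
    constructor
    · intro hx
      have : T x = 0 := hx
      rw [← hTapp x, this, map_zero]
    · intro hx
      have : e (T x) = e 0 := by rw [hTapp x, hx, map_zero]
      exact e.injective this
  -- T is symmetric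
  have hTsym : ∀ x y : EuclideanSpace ℝ (Fin d), (inner ℝ (T x) y : ℝ) = inner ℝ x (T y) := by
    intro x y
    rw [hinner, hinner, hTapp x, hTapp y, Matrix.dotProduct_mulVec,
      ← Matrix.mulVec_transpose, hsym]
  have hkerT : K = (LinearMap.range T)ᗮ := by
    ext x
    rw [Submodule.mem_orthogonal]
    constructor
    · rintro hx y ⟨z, rfl⟩
      rw [hTsym z x]
      have : T x = 0 := hx
      rw [this, inner_zero_right]
    · intro h
      have : (inner ℝ (T x) (T x) : ℝ) = 0 := by
        rw [hTsym, real_inner_comm]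
        exact h (T (T x)) ⟨T x, rfl⟩
      exact inner_self_eq_zero.mp this
  have hrange : Kᗮ = LinearMap.range T := by
    rw [hkerT, Submodule.orthogonal_orthogonal]
  have hVmem : ∀ v : Fin d → ℝ, (e.symm v ∈ Kᗮ ↔ v ∈ Set.range P.mulVec) := by
    intro v
    rw [hrange]
    constructor
    · rintro ⟨y, hy⟩
      refine ⟨e y, ?_⟩
      have := congrArg e hy
      rwa [hTapp, ContinuousLinearEquiv.apply_symm_apply] at this
    · rintro ⟨w, rfl⟩
      refine ⟨e.symm w, ?_⟩
      apply e.injective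
      rw [hTapp, ContinuousLinearEquiv.apply_symm_apply, ContinuousLinearEquiv.apply_symm_apply]
  -- orthogonal projection onto K
  let L : EuclideanSpace ℝ (Fin d) →L[ℝ] EuclideanSpace ℝ (Fin d) :=
    K.subtypeL.comp (Submodule.orthogonalProjectionOnto K)
  have hLapp : ∀ v, L v = (Submodule.orthogonalProjectionOnto K v : EuclideanSpace ℝ (Fin d)) := fun v => rfl
  have hL0 : ∀ v, L v = 0 ↔ v ∈ Kᗮ := by
    intro v
    rw [hLapp, Submodule.coe_eq_zero, Submodule.orthogonalProjectionOnto_eq_zero_iff]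
  have hLK : ∀ v, L v ∈ K := fun v => (Submodule.orthogonalProjectionOnto K v).2
  have hLsub : ∀ v, v - L v ∈ Kᗮ := fun v => Submodule.sub_starProjection_mem_orthogonal v
  -- invariance of K-perp
  have hperp : ∀ (M : Matrix (Fin d) (Fin d) ℝ),
      (∀ x : Fin d → ℝ, P.mulVec x = 0 → P.mulVec (Mᵀ.mulVec x) = 0) →
      ∀ v ∈ Kᗮ, e.symm (M.mulVec (e v)) ∈ Kᗮ := by
    intro M hM v hv
    rw [Submodule.mem_orthogonal]
    intro x hx
    rw [hinner, ContinuousLinearEquiv.apply_symm_apply, Matrix.dotProduct_mulVec,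
      ← Matrix.mulVec_transpose]
    have hx' : e.symm (Mᵀ.mulVec (e x)) ∈ K := by
      rw [hKmem, ContinuousLinearEquiv.apply_symm_apply]
      exact hM (e x) ((hKmem x).mp hx)
    have := (Submodule.mem_orthogonal K v).mp hv _ hx'
    rw [hinner, ContinuousLinearEquiv.apply_symm_apply] at this
    exact this
  have hAperp : ∀ v ∈ Kᗮ, e.symm (A.mulVec (e v)) ∈ Kᗮ :=
    hperp A (fun x hx => (hker x hx).2.2)
  have hNperp : ∀ v ∈ Kᗮ, e.symm (N.mulVec (e v)) ∈ Kᗮ :=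
    hperp N (fun x hx => (hker x hx).2.1)
  have hBperp : ∀ w : Fin n → ℝ, e.symm (B.mulVec w) ∈ Kᗮ := by
    intro w
    rw [Submodule.mem_orthogonal]
    intro x hx
    rw [hinner, ContinuousLinearEquiv.apply_symm_apply, Matrix.dotProduct_mulVec,
      ← Matrix.mulVec_transpose, (hker (e x) ((hKmem x).mp hx)).1, zero_dotProduct]
  -- the conjugated A map as a continuous linear map
  let TA : EuclideanSpace ℝ (Fin d) →ₗ[ℝ] EuclideanSpace ℝ (Fin d) :=
    (e.symm.toLinearEquiv.toLinearMap) ∘ₗ A.mulVecLin ∘ₗ (e.toLinearEquiv.toLinearMap)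
  have hTAapp : ∀ x, TA x = e.symm (A.mulVec (e x)) := fun x => rfl
  let LM : EuclideanSpace ℝ (Fin d) →L[ℝ] EuclideanSpace ℝ (Fin d) :=
    L.comp (LinearMap.toContinuousLinearMap TA)
  have hLMapp : ∀ x, LM x = L (e.symm (A.mulVec (e x))) := by
    intro x
    simp [LM, hTAapp]
  -- ψ
  let G : (Fin d → ℝ) →L[ℝ] EuclideanSpace ℝ (Fin d) := L.comp e.symm.toContinuousLinearMap
  let ψ : ℝ → EuclideanSpace ℝ (Fin d) := fun t => L (e.symm (φ t))
  have hψG : ∀ t, ψ t = G (φ t) := fun t => rfl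
  have hψcont : ContinuousOn ψ (Ici (0 : ℝ)) := G.continuous.comp_continuousOn hcont
  -- derivative of ψ
  have hψderiv : ∀ t > (0 : ℝ), e.symm (φ (t - τ)) ∈ Kᗮ → HasDerivAt ψ (LM (ψ t)) t := by
    intro t ht hmem
    have h1 := (G.hasFDerivAt.comp_hasDerivAt t (hderiv t ht))
    have heq : G (A.mulVec (φ t) + N.mulVec (φ (t - τ)) + B.mulVec (u t)) = LM (ψ t) := by
      have hGdef : ∀ v : Fin d → ℝ, G v = L (e.symm v) := fun v => rfl
      rw [hGdef, map_add, map_add, map_add, map_add]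
      have hz1 : L (e.symm (N.mulVec (φ (t - τ)))) = 0 := by
        rw [hL0]
        have := hNperp _ hmem
        rwa [ContinuousLinearEquiv.apply_symm_apply] at this
      have hz2 : L (e.symm (B.mulVec (u t))) = 0 := (hL0 _).mpr (hBperp (u t))
      rw [hz1, hz2, add_zero, add_zero]
      -- decompose φ t
      have hdec : φ t = e (ψ t) + e (e.symm (φ t) - ψ t) := by
        rw [← map_add, add_sub_cancel, ContinuousLinearEquiv.apply_symm_apply]
      calc L (e.symm (A.mulVec (φ t)))
          = L (e.symm (A.mulVec (e (ψ t)))) + L (e.symm (A.mulVec (e (e.symm (φ t) - ψ t)))) := by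
            rw [← map_add, ← map_add, ← Matrix.mulVec_add, ← hdec]
        _ = LM (ψ t) := by
            rw [hLMapp]
            have : L (e.symm (A.mulVec (e (e.symm (φ t) - ψ t)))) = 0 :=
              (hL0 _).mpr (hAperp _ (hLsub (e.symm (φ t))))
            rw [this, add_zero]
    rw [← heq]
    exact h1
  -- history in terms of ψ
  have hhistψ : ∀ t ∈ Icc (-τ) (0 : ℝ), ψ t = 0 := by
    intro t ht
    exact (hL0 _).mpr ((hVmem (φ t)).mpr (hhist t ht))
  -- main induction
  have main : ∀ m : ℕ, ∀ t ∈ Icc (-τ) ((m : ℝ) * τ), ψ t = 0 := by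
    intro m
    induction m with
    | zero => simpa using hhistψ
    | succ m ih =>
      intro t ht
      by_cases hle : t ≤ (m : ℝ) * τ
      · exact ih t ⟨ht.1, hle⟩
      push_neg at hle
      have ha0 : (0 : ℝ) ≤ (m : ℝ) * τ := mul_nonneg (Nat.cast_nonneg m) hτ.le
      have hb : ((m + 1 : ℕ) : ℝ) * τ = (m : ℝ) * τ + τ := by push_cast; ring
      have hcontψ : ContinuousOn ψ (Icc ((m : ℝ) * τ) ((m : ℝ) * τ + τ)) :=
        hψcont.mono (fun x hx => le_trans ha0 hx.1)
      have hψa : ψ ((m : ℝ) * τ) = 0 := ih _ ⟨by linarith, le_refl _⟩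
      have hd : ∀ s ∈ Ioo ((m : ℝ) * τ) ((m : ℝ) * τ + τ), HasDerivAt ψ (LM (ψ s)) s := by
        intro s hs
        refine hψderiv s (lt_of_le_of_lt ha0 hs.1) ?_
        have hψz : ψ (s - τ) = 0 := ih (s - τ) ⟨by linarith [hs.1], by linarith [hs.2]⟩
        exact (hL0 _).mp hψz
      have hbd : ∀ s ∈ Ioo ((m : ℝ) * τ) ((m : ℝ) * τ + τ), ‖LM (ψ s)‖ ≤ ‖LM‖ * ‖ψ s‖ :=
        fun s _ => LM.le_opNorm (ψ s)
      have := zero_of_deriv_norm_le hcontψ hψa hd hbd t ⟨hle.le, by rw [hb] at ht; exact ht.2⟩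
      exact this
  intro t ht
  obtain ⟨m, hm⟩ := exists_nat_ge (t / τ)
  have htm : t ≤ (m : ℝ) * τ := by
    rw [div_le_iff₀ hτ] at hm
    linarith
  have hz : ψ t = 0 := main m t ⟨by linarith, htm⟩
  exact (hVmem (φ t)).mp ((hL0 _).mp hz)
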